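/- Let (ω_n)_{n≥0} be i.i.d. random variables with values in a measurable space E, let g : E → (0,∞) be measurable and set V_n = g(ω_n). Fix t ≥ 0 and let N = min{n ≥ 0 : V_0 + ⋯ + V_n > t} (which is almost surely finite). Then for every integer k ≥ 1 and every measurable φ : E^k → [0,∞], E[φ(ω_{N−1}, …, ω_{N−k}) · 1_{N ≥ k}] = E[φ(ω_0, …, ω_{k−1}) · 1_{N ≥ k}]; equivalently, conditionally on the event {N ≥ k}, the reversed vector (ω_{N−1}, …, ω_{N−k}) has the same law as (ω_0, …, ω_{k−1}). -/

import Mathlib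

open MeasureTheory ProbabilityTheory
open scoped ENNReal NNReal

/-- The joint law of any finite injectively-indexed subfamily of an i.i.d. family is the
product of the common marginal. -/
lemma aux_map_tuple_eq_pi {Ω E : Type*} [MeasurableSpace Ω] [MeasurableSpace E]
    (μ : Measure Ω) [IsProbabilityMeasure μ]
    (ω : ℕ → Ω → E) (hmeas : ∀ n, Measurable (ω n))
    (hindep : iIndepFun ω μ)
    (hident : ∀ n, Measure.map (ω n) μ = Measure.map (ω 0) μ)
    (m : ℕ) (j : Fin (m + 1) → ℕ) (hj : Function.Injective j) :
    Measure.map (fun x (i : Fin (m + 1)) => ω (j i) x) μ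
      = Measure.pi (fun _ : Fin (m + 1) => Measure.map (ω 0) μ) := by
  classical
  haveI : IsProbabilityMeasure (Measure.map (ω 0) μ) :=
    Measure.isProbabilityMeasure_map (hmeas 0).aemeasurable
  have hY : Measurable (fun x (i : Fin (m + 1)) => ω (j i) x) :=
    measurable_pi_lambda _ fun i => hmeas (j i)
  refine (Measure.pi_eq fun s hs => ?_).symm
  rw [Measure.map_apply hY (MeasurableSet.univ_pi hs)]
  set sets : ℕ → Set E := fun n => s (Function.invFun j n) with hsets
  have hsj : ∀ i, sets (j i) = s i := fun i => by
    simp only [hsets]; rw [Function.leftInverse_invFun hj i]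
  have hpre : (fun x (i : Fin (m + 1)) => ω (j i) x) ⁻¹' Set.pi Set.univ s
      = ⋂ n ∈ Finset.image j Finset.univ, ω n ⁻¹' sets n := by
    ext x
    simp only [Set.mem_preimage, Set.mem_pi, Set.mem_univ, true_implies, Set.mem_iInter,
      Finset.mem_image, Finset.mem_univ, true_and, forall_exists_index]
    constructor
    · rintro h n i rfl
      rw [hsj]; exact h i
    · intro h i
      have := h (j i) i rfl
      rwa [hsj] at this
  rw [hpre, hindep.measure_inter_preimage_eq_mul _ (fun n _ => hs _),
    Finset.prod_image (fun a _ b _ h => hj h)]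
  refine Finset.prod_congr rfl fun i _ => ?_
  rw [Function.leftInverse_invFun hj i, ← Measure.map_apply (hmeas (j i)) (hs i), hident]

/-- Exchangeability of i.i.d. families: permuting the arguments of a measurable
functional does not change its integral. -/
lemma aux_lintegral_perm {Ω E : Type*} [MeasurableSpace Ω] [MeasurableSpace E]
    (μ : Measure Ω) [IsProbabilityMeasure μ]
    (ω : ℕ → Ω → E) (hmeas : ∀ n, Measurable (ω n))
    (hindep : iIndepFun ω μ)
    (hident : ∀ n, Measure.map (ω n) μ = Measure.map (ω 0) μ)
    (m : ℕ) (e : Equiv.Perm (Fin (m + 1)))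
    (F : (Fin (m + 1) → E) → ℝ≥0∞) (hF : Measurable F) :
    ∫⁻ x, F (fun i => ω (e i) x) ∂μ = ∫⁻ x, F (fun i => ω i x) ∂μ := by
  have h1 := aux_map_tuple_eq_pi μ ω hmeas hindep hident m (fun i => ((e i : Fin (m + 1)) : ℕ))
    (fun a b hab => e.injective (Fin.val_injective hab))
  have h2 := aux_map_tuple_eq_pi μ ω hmeas hindep hident m (fun i : Fin (m + 1) => (i : ℕ))
    Fin.val_injective
  calc ∫⁻ x, F (fun i => ω (e i) x) ∂μ
      = ∫⁻ v, F v ∂(Measure.map (fun x (i : Fin (m + 1)) => ω (e i) x) μ) :=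
        (lintegral_map hF (measurable_pi_lambda _ fun i => hmeas _)).symm
    _ = ∫⁻ v, F v ∂(Measure.map (fun x (i : Fin (m + 1)) => ω (i : ℕ) x) μ) := by rw [h1, h2]
    _ = ∫⁻ x, F (fun i => ω i x) ∂μ :=
        lintegral_map hF (measurable_pi_lambda _ fun i => hmeas _)

/-- The key single-level identity: on the event that the sums first exceed `t`
exactly at level `m`, the reversed `k`-tuple has the same integral as the initial one. -/
lemma aux_step {Ω E : Type*} [MeasurableSpace Ω] [MeasurableSpace E]
    (μ : Measure Ω) [IsProbabilityMeasure μ]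
    (ω : ℕ → Ω → E) (hmeas : ∀ n, Measurable (ω n))
    (hindep : iIndepFun ω μ)
    (hident : ∀ n, Measure.map (ω n) μ = Measure.map (ω 0) μ)
    (g : E → ℝ) (hg : Measurable g)
    (t : ℝ) (k m : ℕ) (hk : 1 ≤ k) (hkm : k ≤ m)
    (φ : (Fin k → E) → ℝ≥0∞) (hφ : Measurable φ) :
    ∫⁻ x in {x | (∑ i ∈ Finset.range m, g (ω i x)) ≤ t ∧
        t < ∑ i ∈ Finset.range (m + 1), g (ω i x)},
        φ (fun i : Fin k => ω (m - 1 - (i : ℕ)) x) ∂μ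
    = ∫⁻ x in {x | (∑ i ∈ Finset.range m, g (ω i x)) ≤ t ∧
        t < ∑ i ∈ Finset.range (m + 1), g (ω i x)},
        φ (fun i : Fin k => ω (i : ℕ) x) ∂μ := by
  classical
  -- the reversal permutation on `Fin (m+1)` fixing the last coordinate
  have hinvol : Function.Involutive
      (fun i : Fin (m + 1) =>
        if (i : ℕ) < m then (⟨m - 1 - (i : ℕ), by omega⟩ : Fin (m + 1)) else i) := by
    intro i
    by_cases h : (i : ℕ) < m
    · have h2 : m - 1 - (i : ℕ) < m := by omega
      simp only [h, if_true, h2]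
      exact Fin.ext (by simp; omega)
    · simp [h]
  set e : Equiv.Perm (Fin (m + 1)) := Function.Involutive.toPerm _ hinvol with he
  have he_apply : ∀ i : Fin (m + 1),
      e i = if (i : ℕ) < m then (⟨m - 1 - (i : ℕ), by omega⟩ : Fin (m + 1)) else i :=
    fun i => rfl
  set C : Set Ω := {x | (∑ i ∈ Finset.range m, g (ω i x)) ≤ t ∧
      t < ∑ i ∈ Finset.range (m + 1), g (ω i x)} with hC
  have hCmeas : MeasurableSet C :=
    (measurableSet_le (Finset.measurable_sum _ fun i _ => hg.comp (hmeas i))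
        measurable_const).inter
      (measurableSet_lt measurable_const
        (Finset.measurable_sum _ fun i _ => hg.comp (hmeas i)))
  set D : Set (Fin (m + 1) → E) := {w | (∑ i : Fin m, g (w i.castSucc)) ≤ t ∧
      t < ∑ i : Fin (m + 1), g (w i)} with hD
  have hAmeas : Measurable (fun w : Fin (m + 1) → E => ∑ i : Fin m, g (w i.castSucc)) :=
    Finset.measurable_sum _ fun i _ => hg.comp (measurable_pi_apply _)
  have hBmeas : Measurable (fun w : Fin (m + 1) → E => ∑ i : Fin (m + 1), g (w i)) :=
    Finset.measurable_sum _ fun i _ => hg.comp (measurable_pi_apply _)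
  have hDmeas : MeasurableSet D :=
    (measurableSet_le hAmeas measurable_const).inter
      (measurableSet_lt measurable_const hBmeas)
  set F : (Fin (m + 1) → E) → ℝ≥0∞ :=
    D.indicator (fun w => φ (fun i : Fin k => w ⟨m - 1 - (i : ℕ), by omega⟩)) with hF
  set G : (Fin (m + 1) → E) → ℝ≥0∞ :=
    D.indicator (fun w => φ (fun i : Fin k =>
      w ⟨(i : ℕ), i.isLt.trans_le (by omega)⟩)) with hG
  have hFmeas : Measurable F :=
    (hφ.comp (measurable_pi_lambda _ fun i => measurable_pi_apply _)).indicator hDmeas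
  -- membership transfer between `D` and `C`
  have hmemD : ∀ x : Ω, ((fun i : Fin (m + 1) => ω (i : ℕ) x) ∈ D) ↔ x ∈ C := by
    intro x
    simp only [hD, hC, Set.mem_setOf_eq, Fin.coe_castSucc]
    rw [Fin.sum_univ_eq_sum_range (fun i => g (ω i x)) m,
      Fin.sum_univ_eq_sum_range (fun i => g (ω i x)) (m + 1)]
  -- F composed with the permuted tuple equals G
  have hmem_perm : ∀ v : Fin (m + 1) → E, ((fun i => v (e i)) ∈ D) ↔ v ∈ D := by
    intro v
    have hA : (∑ i : Fin m, g (v (e i.castSucc))) = ∑ i : Fin m, g (v i.castSucc) := by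
      have h1 : ∀ i : Fin m, e i.castSucc = (Fin.rev i).castSucc := by
        intro i
        rw [he_apply]
        have hi : ((i.castSucc : Fin (m + 1)) : ℕ) < m := by
          simp only [Fin.coe_castSucc]; exact i.isLt
        rw [if_pos hi]
        refine Fin.ext ?_
        simp only [Fin.coe_castSucc, Fin.val_rev]
        omega
      calc (∑ i : Fin m, g (v (e i.castSucc)))
          = ∑ i : Fin m, g (v ((Fin.revPerm i).castSucc)) :=
            Finset.sum_congr rfl fun i _ => by rw [h1]; rfl
        _ = ∑ i : Fin m, g (v i.castSucc) :=
            Equiv.sum_comp Fin.revPerm (fun i : Fin m => g (v i.castSucc))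
    have hB : (∑ i : Fin (m + 1), g (v (e i))) = ∑ i : Fin (m + 1), g (v i) :=
      Equiv.sum_comp e (fun i : Fin (m + 1) => g (v i))
    simp only [hD, Set.mem_setOf_eq]
    rw [hA, hB]
  have hFG : ∀ v : Fin (m + 1) → E, F (fun i => v (e i)) = G v := by
    intro v
    have hval : (fun i : Fin k => v (e ⟨m - 1 - (i : ℕ), by omega⟩))
        = fun i : Fin k => v ⟨(i : ℕ), i.isLt.trans_le (by omega)⟩ := by
      funext i
      congr 1
      rw [he_apply]
      have hlt : ((⟨m - 1 - (i : ℕ), by omega⟩ : Fin (m + 1)) : ℕ) < m := by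
        simp only []; omega
      rw [if_pos hlt]
      refine Fin.ext ?_
      have := i.isLt
      simp only []
      omega
    by_cases hvD : v ∈ D
    · rw [hF, hG, Set.indicator_of_mem ((hmem_perm v).2 hvD), Set.indicator_of_mem hvD]
      exact congrArg φ hval
    · rw [hF, hG, Set.indicator_of_notMem (fun h => hvD ((hmem_perm v).1 h)),
        Set.indicator_of_notMem hvD]
  -- rewrite both sides as integrals of F against the tuple maps
  have key1 : ∫⁻ x in C, φ (fun i : Fin k => ω (m - 1 - (i : ℕ)) x) ∂μ
      = ∫⁻ x, F (fun i : Fin (m + 1) => ω (i : ℕ) x) ∂μ := by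
    rw [← lintegral_indicator hCmeas]
    refine lintegral_congr fun x => ?_
    by_cases hx : x ∈ C
    · rw [Set.indicator_of_mem hx, hF, Set.indicator_of_mem ((hmemD x).2 hx)]
    · rw [Set.indicator_of_notMem hx, hF,
        Set.indicator_of_notMem (fun h => hx ((hmemD x).1 h))]
  have key2 : ∫⁻ x in C, φ (fun i : Fin k => ω (i : ℕ) x) ∂μ
      = ∫⁻ x, F (fun i : Fin (m + 1) => ω ((e i : Fin (m + 1)) : ℕ) x) ∂μ := by
    rw [← lintegral_indicator hCmeas]
    refine lintegral_congr fun x => ?_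
    have hfg := hFG (fun i : Fin (m + 1) => ω (i : ℕ) x)
    by_cases hx : x ∈ C
    · rw [Set.indicator_of_mem hx]
      have : F (fun i : Fin (m + 1) => ω ((e i : Fin (m + 1)) : ℕ) x)
          = G (fun i : Fin (m + 1) => ω (i : ℕ) x) := hfg
      rw [this, hG, Set.indicator_of_mem ((hmemD x).2 hx)]
    · rw [Set.indicator_of_notMem hx]
      have : F (fun i : Fin (m + 1) => ω ((e i : Fin (m + 1)) : ℕ) x)
          = G (fun i : Fin (m + 1) => ω (i : ℕ) x) := hfg
      rw [this, hG, Set.indicator_of_notMem (fun h => hx ((hmemD x).1 h))]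
  rw [key1, key2]
  exact (aux_lintegral_perm μ ω hmeas hindep hident m e F hFmeas).symm

/-- **Exchangeability identity at the first-passage level** (Statement 1).
Let `(ω n)` be i.i.d. `E`-valued random variables, `g : E → (0,∞)` measurable,
`V n = g (ω n)`, and let `N = min {n : V 0 + ⋯ + V n > t}` be the first time the
partial sums exceed `t`.  Then for every `k ≥ 1` and every measurable
`φ : E^k → [0,∞]`,
`E[φ(ω (N-1), …, ω (N-k)) 1_{N ≥ k}] = E[φ(ω 0, …, ω (k-1)) 1_{N ≥ k}]`. -/
theorem exchangeability_identity_first_passage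
    {Ω E : Type*} [MeasurableSpace Ω] [MeasurableSpace E]
    (μ : Measure Ω) [IsProbabilityMeasure μ]
    (ω : ℕ → Ω → E) (hmeas : ∀ n, Measurable (ω n))
    (hindep : iIndepFun ω μ)
    (hident : ∀ n, Measure.map (ω n) μ = Measure.map (ω 0) μ)
    (g : E → ℝ) (hg : Measurable g) (hgpos : ∀ e, 0 < g e)
    (t : ℝ) (ht : 0 ≤ t) (k : ℕ) (hk : 1 ≤ k)
    (N : Ω → ℕ)
    (hN : ∀ x, N x = sInf {n : ℕ | t < ∑ i ∈ Finset.range (n + 1), g (ω i x)})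
    (φ : (Fin k → E) → ℝ≥0∞) (hφ : Measurable φ) :
    ∫⁻ x in {x | k ≤ N x}, φ (fun i => ω (N x - 1 - (i : ℕ)) x) ∂μ
      = ∫⁻ x in {x | k ≤ N x}, φ (fun i => ω (i : ℕ) x) ∂μ := by
  classical
  have hSmono : ∀ (x : Ω) (a b : ℕ), a ≤ b →
      (∑ i ∈ Finset.range a, g (ω i x)) ≤ ∑ i ∈ Finset.range b, g (ω i x) := by
    intro x a b hab
    exact Finset.sum_le_sum_of_subset_of_nonneg (Finset.range_subset_range.2 hab)
      fun i _ _ => (hgpos _).le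
  -- characterization of `{N = m}` for `m ≥ 1`
  have hchar : ∀ (m : ℕ), 1 ≤ m → ∀ x, (N x = m ↔
      ((∑ i ∈ Finset.range m, g (ω i x)) ≤ t ∧
        t < ∑ i ∈ Finset.range (m + 1), g (ω i x))) := by
    intro m hm x
    rw [hN x]
    constructor
    · intro h
      have hne : {n : ℕ | t < ∑ i ∈ Finset.range (n + 1), g (ω i x)}.Nonempty := by
        rcases Set.eq_empty_or_nonempty
          {n : ℕ | t < ∑ i ∈ Finset.range (n + 1), g (ω i x)} with hemp | hne
        · rw [hemp, Nat.sInf_empty] at h; omega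
        · exact hne
      have hmem := Nat.sInf_mem hne
      rw [h] at hmem
      refine ⟨?_, hmem⟩
      have hnm : m - 1 ∉ {n : ℕ | t < ∑ i ∈ Finset.range (n + 1), g (ω i x)} :=
        Nat.notMem_of_lt_sInf (by omega)
      have h2 : ¬ t < ∑ i ∈ Finset.range (m - 1 + 1), g (ω i x) := hnm
      rw [show m - 1 + 1 = m by omega] at h2
      linarith
    · rintro ⟨h1, h2⟩
      have hm2 : m ∈ {n : ℕ | t < ∑ i ∈ Finset.range (n + 1), g (ω i x)} := h2
      refine le_antisymm (Nat.sInf_le hm2) (le_of_not_gt fun hc => ?_)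
      have hmem := Nat.sInf_mem (Set.nonempty_of_mem hm2)
      set n0 := sInf {n : ℕ | t < ∑ i ∈ Finset.range (n + 1), g (ω i x)} with hn0
      have hmem' : t < ∑ i ∈ Finset.range (n0 + 1), g (ω i x) := hmem
      have hle := hSmono x (n0 + 1) m (by omega)
      linarith
  have hBC : ∀ n : ℕ, {x | N x = k + n}
      = {x | (∑ i ∈ Finset.range (k + n), g (ω i x)) ≤ t ∧
          t < ∑ i ∈ Finset.range (k + n + 1), g (ω i x)} :=
    fun n => Set.ext fun x => hchar (k + n) (by omega) x
  have hBmeas : ∀ n : ℕ, MeasurableSet {x | N x = k + n} := by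
    intro n
    rw [hBC n]
    exact (measurableSet_le (Finset.measurable_sum _ fun i _ => hg.comp (hmeas i))
        measurable_const).inter
      (measurableSet_lt measurable_const
        (Finset.measurable_sum _ fun i _ => hg.comp (hmeas i)))
  have hA : {x | k ≤ N x} = ⋃ n : ℕ, {x | N x = k + n} := by
    ext x
    simp only [Set.mem_setOf_eq, Set.mem_iUnion]
    constructor
    · intro h; exact ⟨N x - k, by omega⟩
    · rintro ⟨n, hn⟩; omega
  have hdisj : Pairwise (Function.onFun Disjoint fun n : ℕ => {x | N x = k + n}) := by
    intro a b hab
    simp only [Function.onFun, Set.disjoint_left, Set.mem_setOf_eq]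
    intro x hxa hxb
    exact hab (by omega)
  rw [hA, lintegral_iUnion hBmeas hdisj, lintegral_iUnion hBmeas hdisj]
  refine tsum_congr fun n => ?_
  have hLHS : ∫⁻ x in {x | N x = k + n}, φ (fun i : Fin k => ω (N x - 1 - (i : ℕ)) x) ∂μ
      = ∫⁻ x in {x | N x = k + n}, φ (fun i : Fin k => ω (k + n - 1 - (i : ℕ)) x) ∂μ := by
    rw [← lintegral_indicator (hBmeas n), ← lintegral_indicator (hBmeas n)]
    refine lintegral_congr fun x => ?_
    by_cases hx : x ∈ {x | N x = k + n}
    · rw [Set.indicator_of_mem hx, Set.indicator_of_mem hx]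
      have hNx : N x = k + n := hx
      rw [hNx]
    · rw [Set.indicator_of_notMem hx, Set.indicator_of_notMem hx]
  rw [hLHS, hBC n]
  exact aux_step μ ω hmeas hindep hident g hg t k (k + n) hk (by omega) φ hφ
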